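/- arXiv:math/0208240 — 4 statements merged into one kernel-verified Lean document; each statement's English description precedes it below -/
import Mathlib

section
/- Let M be a real n×n matrix with spectral radius strictly less than 1, and let d ≥ 2. Then the linear operator T on the space of homogeneous polynomials of degree d in n variables defined by (Tπ)(x) = π(x) - π(Mx) is invertible; in particular, for any homogeneous polynomial q of degree d there exists a unique homogeneous polynomial π of degree d with π(x) - π(Mx) = q(x) for all x. -/
open Filter Topology
open scoped ENNReal NNReal Matrix

attribute [local instance] Matrix.linftyOpNormedRing Matrix.linftyOpNormedAlgebra

private lemma tendsto_norm_pow_zero' {A : Type*} [NormedRing A] [NormedAlgebra ℂ A]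
    [CompleteSpace A] (a : A) (h : spectralRadius ℂ a < 1) :
    Tendsto (fun k : ℕ => ‖a ^ k‖) atTop (𝓝 0) := by
  obtain ⟨c, hc1, hc2⟩ := exists_between h
  have hcne : c ≠ ⊤ := (hc2.trans_le le_top).ne
  have hGel := spectrum.pow_nnnorm_pow_one_div_tendsto_nhds_spectralRadius a
  have hev : ∀ᶠ k : ℕ in atTop, ((‖a ^ k‖₊ : ℝ≥0∞)) ^ (1 / (k:ℝ)) < c :=
    hGel.eventually_lt_const hc1
  have hr1 : c.toReal < 1 := by
    have := ENNReal.toReal_lt_toReal hcne (by norm_num : (1:ℝ≥0∞) ≠ ⊤)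
    simpa using this.mpr hc2
  have hr0 : 0 ≤ c.toReal := ENNReal.toReal_nonneg
  refine squeeze_zero' (Eventually.of_forall fun k => norm_nonneg _) ?_
    (tendsto_pow_atTop_nhds_zero_of_lt_one hr0 hr1)
  filter_upwards [hev, eventually_ge_atTop 1] with k hk hk1
  have hkne : (k:ℝ) ≠ 0 := by positivity
  have hx : (‖a ^ k‖₊ : ℝ≥0∞) ≤ c ^ k := by
    have h1 : ((‖a ^ k‖₊ : ℝ≥0∞) ^ (1 / (k:ℝ))) ^ (k:ℝ) ≤ c ^ (k:ℝ) :=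
      ENNReal.rpow_le_rpow hk.le (by positivity)
    rw [← ENNReal.rpow_mul, one_div, inv_mul_cancel₀ hkne, ENNReal.rpow_one] at h1
    rwa [← ENNReal.rpow_natCast c]
  calc ‖a ^ k‖ = (‖a ^ k‖₊ : ℝ≥0∞).toReal := by simp
    _ ≤ (c ^ k).toReal := ENNReal.toReal_mono (by simp [ENNReal.pow_ne_top hcne]) hx
    _ = c.toReal ^ k := by simp [ENNReal.toReal_pow]

private lemma mulVec_pow_tendsto' (n : ℕ) (M : Matrix (Fin n) (Fin n) ℝ)
    (hspec : ∀ μ ∈ spectrum ℂ (M.map (Complex.ofReal)), ‖μ‖ < 1)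
    (x : Fin n → ℝ) :
    Tendsto (fun k : ℕ => (M ^ k) *ᵥ x) atTop (𝓝 0) := by
  rw [tendsto_pi_nhds]
  intro i
  haveI : Nonempty (Fin n) := ⟨i⟩
  set B : Matrix (Fin n) (Fin n) ℂ := M.map (Complex.ofReal) with hB
  have hrad : spectralRadius ℂ B < 1 := by
    have h1 := spectrum.spectralRadius_lt_of_forall_lt (a := B) (r := 1)
      (fun z hz => by
        have := hspec z hz
        exact_mod_cast this)
    simpa using h1
  have hnorm := tendsto_norm_pow_zero' B hrad
  have hBk : ∀ k : ℕ, B ^ k = (M ^ k).map (Complex.ofReal) := by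
    intro k
    induction k with
    | zero => simp [Matrix.map_one]
    | succ k ih =>
        rw [pow_succ, pow_succ, ih]
        ext a b
        simp [Matrix.mul_apply, hB]
  have key : ∀ k : ℕ, |((M ^ k) *ᵥ x) i| ≤ ‖B ^ k‖ * ‖(fun j => (x j : ℂ))‖ := by
    intro k
    have h1 : ((M ^ k).map Complex.ofReal *ᵥ ((Complex.ofRealHom : ℝ →+* ℂ) ∘ x)) i
        = (((M ^ k) *ᵥ x) i : ℂ) :=
      (RingHom.map_mulVec Complex.ofRealHom (M ^ k) x i).symm
    calc |((M ^ k) *ᵥ x) i| = ‖(((M ^ k) *ᵥ x) i : ℂ)‖ := by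
          rw [Complex.norm_real]; rfl
      _ = ‖((B ^ k) *ᵥ (fun j => (x j : ℂ))) i‖ := by
          rw [hBk k, ← h1]; rfl
      _ ≤ ‖(B ^ k) *ᵥ (fun j => (x j : ℂ))‖ := norm_le_pi_norm _ i
      _ ≤ ‖B ^ k‖ * ‖(fun j => (x j : ℂ))‖ := Matrix.linfty_opNorm_mulVec _ _
  simpa using squeeze_zero_norm key (by simpa using hnorm.mul_const ‖(fun j => (x j : ℂ))‖)

/-- If all (complex) eigenvalues of the real matrix `M` have modulus `< 1` and `d ≥ 2`,
then for any homogeneous polynomial `q` of degree `d` there is a unique homogeneous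
polynomial `π` of degree `d` with `π(x) - π(Mx) = q(x)`. -/
theorem homogeneous_term_solvable
    (n d : ℕ) (hd : 2 ≤ d) (M : Matrix (Fin n) (Fin n) ℝ)
    (hspec : ∀ μ ∈ spectrum ℂ (M.map (Complex.ofReal)), ‖μ‖ < 1) :
    ∀ q ∈ MvPolynomial.homogeneousSubmodule (Fin n) ℝ d,
      ∃! p : MvPolynomial (Fin n) ℝ,
        p ∈ MvPolynomial.homogeneousSubmodule (Fin n) ℝ d ∧
        p - MvPolynomial.aeval (fun i => ∑ j, MvPolynomial.C (M i j) * MvPolynomial.X j) p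
          = q := by
  classical
  intro q hq
  set H := MvPolynomial.homogeneousSubmodule (Fin n) ℝ d with hH
  set f : Fin n → MvPolynomial (Fin n) ℝ :=
    fun i => ∑ j, MvPolynomial.C (M i j) * MvPolynomial.X j with hf
  have hf1 : ∀ i, (f i).IsHomogeneous 1 := by
    intro i
    apply MvPolynomial.IsHomogeneous.sum
    intro j _
    simpa using (MvPolynomial.isHomogeneous_C _ (M i j)).mul (MvPolynomial.isHomogeneous_X _ j)
  have hS : ∀ p ∈ H, (MvPolynomial.aeval f p : MvPolynomial (Fin n) ℝ) ∈ H := by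
    intro p hp
    rw [hH, MvPolynomial.mem_homogeneousSubmodule] at *
    simpa using hp.aeval f hf1
  -- finite dimensionality
  have hle : H ≤ MvPolynomial.restrictTotalDegree (Fin n) ℝ d := by
    intro p hp
    rw [MvPolynomial.mem_restrictTotalDegree]
    exact ((MvPolynomial.mem_homogeneousSubmodule _ _).mp hp).totalDegree_le
  haveI : FiniteDimensional ℝ H := Submodule.finiteDimensional_of_le hle
  -- the operator
  let L : MvPolynomial (Fin n) ℝ →ₗ[ℝ] MvPolynomial (Fin n) ℝ :=
    LinearMap.id - (MvPolynomial.aeval f).toLinearMap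
  have hLmem : ∀ p ∈ H, L p ∈ H := fun p hp => H.sub_mem hp (hS p hp)
  let T : H →ₗ[ℝ] H := L.restrict hLmem
  have hLapp : ∀ p : MvPolynomial (Fin n) ℝ, L p = p - MvPolynomial.aeval f p := by
    intro p; simp [L]
  -- injectivity
  have hinj : Function.Injective T := by
    rw [← LinearMap.ker_eq_bot, eq_bot_iff]
    rintro ⟨p, hp⟩ hker
    have h0 : L p = 0 := by
      have := (LinearMap.mem_ker.mp hker)
      have h := congrArg Subtype.val this
      simpa [T, LinearMap.restrict_apply] using h
    rw [hLapp] at h0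
    have hfix : MvPolynomial.aeval f p = p := by
      have := sub_eq_zero.mp h0
      exact this.symm
    have heval : ∀ x : Fin n → ℝ, MvPolynomial.eval (M *ᵥ x) p = MvPolynomial.eval x p := by
      intro x
      have h1 : MvPolynomial.eval (MvPolynomial.eval x ∘ f) p
          = MvPolynomial.eval x (MvPolynomial.eval₂ MvPolynomial.C f p) :=
        MvPolynomial.eval_assoc f x p
      have h2 : MvPolynomial.eval₂ MvPolynomial.C f p = MvPolynomial.aeval f p := by
        rw [MvPolynomial.aeval_eq_eval₂Hom]; rfl
      have h3 : (MvPolynomial.eval x ∘ f) = M *ᵥ x := by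
        funext i
        simp [f, Matrix.mulVec, dotProduct]
      rw [← h3, h1, h2, hfix]
    have hiter : ∀ (k : ℕ) (x : Fin n → ℝ),
        MvPolynomial.eval ((M ^ k) *ᵥ x) p = MvPolynomial.eval x p := by
      intro k
      induction k with
      | zero => intro x; simp [Matrix.one_mulVec]
      | succ k ih =>
        intro x
        rw [pow_succ, ← Matrix.mulVec_mulVec, ih (M *ᵥ x), heval x]
    have hzero : ∀ x : Fin n → ℝ, MvPolynomial.eval x p = MvPolynomial.eval 0 p := by
      intro x
      have htt : Tendsto (fun k : ℕ => MvPolynomial.eval ((M ^ k) *ᵥ x) p) atTop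
          (𝓝 (MvPolynomial.eval 0 p)) :=
        ((MvPolynomial.continuous_eval p).tendsto 0).comp (mulVec_pow_tendsto' n M hspec x)
      have hconst : (fun k : ℕ => MvPolynomial.eval ((M ^ k) *ᵥ x) p)
          = fun _ => MvPolynomial.eval x p := funext fun k => hiter k x
      rw [hconst] at htt
      exact tendsto_nhds_unique tendsto_const_nhds htt
    have hc0 : MvPolynomial.eval (0 : Fin n → ℝ) p = 0 := by
      rw [MvPolynomial.eval_zero]
      have hhom : p.IsHomogeneous d := (MvPolynomial.mem_homogeneousSubmodule _ _).mp hp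
      have h00 := hhom.coeff_eq_zero (d := (0 : (Fin n) →₀ ℕ))
        (by rw [map_zero]; omega)
      rw [MvPolynomial.constantCoeff_eq]
      exact h00
    have hp0 : p = 0 := by
      apply MvPolynomial.funext
      intro x
      rw [hzero x, hc0, map_zero]
    rw [Submodule.mem_bot]
    exact Subtype.ext hp0
  have hsurj : Function.Surjective T := (LinearMap.injective_iff_surjective).mp hinj
  obtain ⟨p', hp'⟩ := hsurj ⟨q, hq⟩
  have hp'val : p'.1 - MvPolynomial.aeval f p'.1 = q := by
    have h := congrArg Subtype.val hp'
    simpa [T, LinearMap.restrict_apply, hLapp] using h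
  refine ⟨p'.1, ⟨p'.2, hp'val⟩, ?_⟩
  rintro y ⟨hyH, hyeq⟩
  have hTy : T ⟨y, hyH⟩ = ⟨q, hq⟩ := by
    apply Subtype.ext
    simpa [T, LinearMap.restrict_apply, hLapp] using hyeq
  have hyp' := hinj (hTy.trans hp'.symm)
  exact congrArg Subtype.val hyp'
end

section
/- Let A_s and A_u be real square matrices such that every eigenvalue μ of A_s satisfies |μ| < 1 and every eigenvalue ξ of A_u satisfies |ξ| > 1. Then for any d ≥ 2, the linear operator φ ↦ A_u·φ(z) - φ(A_s z), acting on vector-valued homogeneous polynomials of degree d, is invertible. -/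
open Filter Topology MvPolynomial Matrix
open scoped ENNReal NNReal
open scoped Matrix.Norms.L2Operator

namespace StableAux

lemma pow_norm_tendsto_zero {A : Type*} [NormedRing A] [NormedAlgebra ℂ A] [CompleteSpace A]
    (a : A) (h : ∀ z ∈ spectrum ℂ a, ‖z‖₊ < 1) :
    Tendsto (fun k : ℕ => ‖a ^ k‖) atTop (𝓝 0) := by
  have hsr : spectralRadius ℂ a < 1 := by
    rcases Set.eq_empty_or_nonempty (spectrum ℂ a) with he | hne
    · rw [spectralRadius]
      simp [he]
    · have := spectrum.spectralRadius_lt_of_forall_lt_of_nonempty hne (r := 1) h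
      simpa using this
  obtain ⟨r, hr1, hr2⟩ := ENNReal.lt_iff_exists_nnreal_btwn.mp hsr
  have hGel := spectrum.pow_nnnorm_pow_one_div_tendsto_nhds_spectralRadius a
  have hev : ∀ᶠ k : ℕ in atTop, (‖a ^ k‖₊ : ℝ≥0∞) ^ (1 / (k : ℕ) : ℝ) < (r : ℝ≥0∞) :=
    hGel.eventually_lt_const hr1
  have hr' : (r : ℝ) < 1 := by exact_mod_cast hr2
  have key : ∀ᶠ k in atTop, ‖a ^ k‖ ≤ (r : ℝ) ^ k := by
    filter_upwards [hev, eventually_ge_atTop 1] with k hk hk1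
    have hk0 : (k : ℝ) ≠ 0 := by
      have : (1 : ℕ) ≤ k := hk1
      positivity
    have h2 := ENNReal.rpow_lt_rpow hk (by positivity : (0:ℝ) < (k : ℝ))
    rw [← ENNReal.rpow_mul, one_div, inv_mul_cancel₀ hk0, ENNReal.rpow_one,
      ENNReal.rpow_natCast, ← ENNReal.coe_pow, ENNReal.coe_lt_coe] at h2
    have h3 : ‖a ^ k‖₊ ≤ r ^ k := le_of_lt h2
    calc ‖a ^ k‖ = ((‖a ^ k‖₊ : ℝ≥0) : ℝ) := rfl
      _ ≤ ((r ^ k : ℝ≥0) : ℝ) := by exact_mod_cast h3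
      _ = (r : ℝ) ^ k := by push_cast; ring
  exact squeeze_zero' (Eventually.of_forall fun k => norm_nonneg _) key
    (tendsto_pow_atTop_nhds_zero_of_lt_one (by positivity) hr')

lemma euclid_coord_le {p : ℕ} (v : EuclideanSpace ℂ (Fin p)) (i : Fin p) : ‖v i‖ ≤ ‖v‖ := by
  rw [EuclideanSpace.norm_eq]
  calc ‖v i‖ = Real.sqrt (‖v i‖ ^ 2) := (Real.sqrt_sq (norm_nonneg _)).symm
    _ ≤ Real.sqrt (∑ j, ‖v j‖ ^ 2) := by
        apply Real.sqrt_le_sqrt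
        exact Finset.single_le_sum (f := fun j => ‖v j‖ ^ 2) (fun _ _ => sq_nonneg _)
          (Finset.mem_univ i)

lemma entry_norm_le {p : ℕ} (B : Matrix (Fin p) (Fin p) ℂ) (i j : Fin p) : ‖B i j‖ ≤ ‖B‖ := by
  have hsingle : ‖((WithLp.equiv 2 (Fin p → ℂ)).symm (Pi.single j 1) : EuclideanSpace ℂ (Fin p))‖
      = 1 := by
    simpa using EuclideanSpace.norm_single (𝕜 := ℂ) j 1
  calc ‖B i j‖ = ‖(B *ᵥ (Pi.single j 1)) i‖ := by simp [Matrix.mulVec_single]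
    _ ≤ ‖((EuclideanSpace.equiv (Fin p) ℂ).symm (B *ᵥ Pi.single j 1) : EuclideanSpace ℂ (Fin p))‖ :=
        euclid_coord_le ((EuclideanSpace.equiv (Fin p) ℂ).symm (B *ᵥ Pi.single j 1)) i
    _ ≤ ‖B‖ * ‖((WithLp.equiv 2 (Fin p → ℂ)).symm (Pi.single j 1) : EuclideanSpace ℂ (Fin p))‖ :=
        B.l2_opNorm_mulVec ((WithLp.equiv 2 (Fin p → ℂ)).symm (Pi.single j 1))
    _ = ‖B‖ := by rw [hsingle, mul_one]

lemma entries_pow_tendsto_zero {p : ℕ} (M : Matrix (Fin p) (Fin p) ℝ)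
    (h : ∀ μ ∈ spectrum ℂ (M.map Complex.ofReal), ‖μ‖ < 1) (i j : Fin p) :
    Tendsto (fun k : ℕ => (M ^ k) i j) atTop (𝓝 0) := by
  set N : Matrix (Fin p) (Fin p) ℂ := M.map Complex.ofReal with hN
  have h' : ∀ z ∈ spectrum ℂ N, ‖z‖₊ < 1 := by
    intro z hz
    have := h z hz
    rw [← NNReal.coe_lt_coe]
    simpa [coe_nnnorm] using this
  have hA := pow_norm_tendsto_zero N h'
  have hNk : ∀ k : ℕ, N ^ k = (M ^ k).map Complex.ofReal := by
    intro k
    have : (Complex.ofRealHom.mapMatrix (M ^ k) : Matrix (Fin p) (Fin p) ℂ)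
        = Complex.ofRealHom.mapMatrix M ^ k := map_pow _ M k
    exact this.symm
  rw [tendsto_zero_iff_norm_tendsto_zero]
  apply squeeze_zero (fun k => norm_nonneg _) (g := fun k => ‖N ^ k‖) _ hA
  intro k
  calc ‖(M ^ k) i j‖ = ‖(N ^ k) i j‖ := by
        rw [hNk k]; simp [Matrix.map_apply, Complex.norm_real]
    _ ≤ ‖N ^ k‖ := entry_norm_le _ i j

lemma unstable_inverse {p : ℕ} (A : Matrix (Fin p) (Fin p) ℝ)
    (h : ∀ ξ ∈ spectrum ℂ (A.map Complex.ofReal), 1 < ‖ξ‖) :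
    IsUnit A.det ∧ ∀ μ ∈ spectrum ℂ ((A⁻¹).map Complex.ofReal), ‖μ‖ < 1 := by
  set B : Matrix (Fin p) (Fin p) ℂ := A.map Complex.ofReal with hB
  have hBunit : IsUnit B := by
    apply spectrum.isUnit_of_zero_notMem (R := ℂ)
    intro h0
    have h2 := h 0 h0
    simp at h2
    exact absurd h2 (by norm_num)
  have hdetB : IsUnit B.det := (Matrix.isUnit_iff_isUnit_det B).mp hBunit
  have hdetmap : B.det = Complex.ofReal A.det := by
    rw [hB]
    exact (RingHom.map_det Complex.ofRealHom A).symm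
  have hdetA : IsUnit A.det := by
    rw [hdetmap, isUnit_iff_ne_zero, ne_eq, Complex.ofReal_eq_zero] at hdetB
    exact isUnit_iff_ne_zero.mpr hdetB
  refine ⟨hdetA, ?_⟩
  set C : Matrix (Fin p) (Fin p) ℂ := (A⁻¹).map Complex.ofReal with hC
  have hre : (Complex.ofReal : ℝ → ℂ) = ⇑Complex.ofRealHom := rfl
  have hmul1 : B * C = 1 := by
    rw [hB, hC, hre, ← Matrix.map_mul, Matrix.mul_nonsing_inv A hdetA]
    exact Matrix.map_one _ Complex.ofReal_zero Complex.ofReal_one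
  have hmul2 : C * B = 1 := by
    rw [hB, hC, hre, ← Matrix.map_mul, Matrix.nonsing_inv_mul A hdetA]
    exact Matrix.map_one _ Complex.ofReal_zero Complex.ofReal_one
  set u : (Matrix (Fin p) (Fin p) ℂ)ˣ := ⟨B, C, hmul1, hmul2⟩ with hu
  intro μ hμ
  have hCunit : IsUnit C := ⟨u⁻¹, rfl⟩
  have hμ0 : μ ≠ 0 := by
    rintro rfl
    exact spectrum.zero_notMem ℂ hCunit hμ
  have hBinv : B⁻¹ = C := Matrix.inv_eq_right_inv hmul1
  have hmem : (μ⁻¹ : ℂ) ∈ spectrum ℂ B := by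
    have := (spectrum.inv_mem_iff (r := Units.mk0 μ hμ0) (a := u⁻¹)).mp (by exact hμ)
    exact this
  have hξ := h μ⁻¹ hmem
  rw [norm_inv] at hξ
  have h0 : 0 < ‖μ‖ := norm_pos_iff.mpr hμ0
  have h1 : ‖μ‖ * 1 < ‖μ‖ * (‖μ‖)⁻¹ :=
    mul_lt_mul_of_pos_left hξ h0
  rwa [mul_one, mul_inv_cancel₀ (ne_of_gt h0)] at h1

instance homogeneous_fd (n d : ℕ) :
    FiniteDimensional ℝ (homogeneousSubmodule (Fin n) ℝ d) := by
  apply Submodule.finiteDimensional_of_le (S₂ := restrictTotalDegree (Fin n) ℝ d)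
  intro q hq
  rw [mem_restrictTotalDegree]
  exact ((mem_homogeneousSubmodule _ _).mp hq).totalDegree_le

end StableAux

/-- If every eigenvalue of `A_s` has modulus `< 1` and every eigenvalue of `A_u` has
modulus `> 1`, then for `d ≥ 2` the operator `φ ↦ A_u·φ(z) - φ(A_s z)` on vector-valued
homogeneous polynomial maps of degree `d` is invertible. -/
theorem stable_manifold_homogeneous_solvable
    (n m d : ℕ) (hd : 2 ≤ d)
    (As : Matrix (Fin n) (Fin n) ℝ) (Au : Matrix (Fin m) (Fin m) ℝ)
    (hs : ∀ μ ∈ spectrum ℂ (As.map (Complex.ofReal)), ‖μ‖ < 1)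
    (hu : ∀ ξ ∈ spectrum ℂ (Au.map (Complex.ofReal)), 1 < ‖ξ‖) :
    ∀ f : Fin m → MvPolynomial (Fin n) ℝ,
      (∀ i, f i ∈ MvPolynomial.homogeneousSubmodule (Fin n) ℝ d) →
      ∃! φ : Fin m → MvPolynomial (Fin n) ℝ,
        (∀ i, φ i ∈ MvPolynomial.homogeneousSubmodule (Fin n) ℝ d) ∧
        (∀ i, (∑ j, MvPolynomial.C (Au i j) * φ j)
            - MvPolynomial.aeval
                (fun k => ∑ l, MvPolynomial.C (As k l) * MvPolynomial.X l) (φ i)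
          = f i) := by
  classical
  intro f hf
  set σp : Fin n → MvPolynomial (Fin n) ℝ :=
    fun k => ∑ l, MvPolynomial.C (As k l) * MvPolynomial.X l with hσp
  have hσhom : ∀ k, (σp k).IsHomogeneous 1 := by
    intro k
    exact IsHomogeneous.sum _ _ _ fun l _ => (isHomogeneous_X _ _).C_mul _
  have hcomp : ∀ q : MvPolynomial (Fin n) ℝ, q.IsHomogeneous d →
      (MvPolynomial.aeval σp q).IsHomogeneous d := by
    intro q hq
    simpa using hq.aeval σp hσhom
  set H := MvPolynomial.homogeneousSubmodule (Fin n) ℝ d with hH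
  have hTmem : ∀ (φ : Fin m → H) (i : Fin m),
      (∑ j, MvPolynomial.C (Au i j) * (φ j : MvPolynomial (Fin n) ℝ))
        - MvPolynomial.aeval σp (φ i : MvPolynomial (Fin n) ℝ) ∈ H := by
    intro φ i
    refine Submodule.sub_mem _ (Submodule.sum_mem _ fun j _ => ?_) (hcomp _ (φ i).2)
    rw [← MvPolynomial.smul_eq_C_mul]
    exact Submodule.smul_mem _ _ (φ j).2
  let T : (Fin m → H) →ₗ[ℝ] (Fin m → H) :=
    { toFun := fun φ i => ⟨_, hTmem φ i⟩
      map_add' := by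
        intro x y
        funext i
        apply Subtype.ext
        simp only [Pi.add_apply, Submodule.coe_add, mul_add, Finset.sum_add_distrib, map_add]
        abel
      map_smul' := by
        intro r x
        funext i
        apply Subtype.ext
        simp only [Pi.smul_apply, SetLike.val_smul, mul_smul_comm, ← Finset.smul_sum,
          _root_.map_smul, ← smul_sub, RingHom.id_apply] }
  obtain ⟨hdetAu, hAuInvSpec⟩ := StableAux.unstable_inverse Au hu
  have hAs_ent : ∀ l l', Filter.Tendsto (fun k : ℕ => (As ^ k) l l')
      Filter.atTop (nhds 0) := fun l l' => StableAux.entries_pow_tendsto_zero As hs l l'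
  have hAu_ent : ∀ i j, Filter.Tendsto (fun k : ℕ => ((Au⁻¹) ^ k) i j)
      Filter.atTop (nhds 0) := fun i j => StableAux.entries_pow_tendsto_zero Au⁻¹ hAuInvSpec i j
  have hker : ∀ φ : Fin m → H, T φ = 0 → φ = 0 := by
    intro φ hT
    have hEq : ∀ i, (∑ j, MvPolynomial.C (Au i j) * (φ j : MvPolynomial (Fin n) ℝ))
        = MvPolynomial.aeval σp (φ i : MvPolynomial (Fin n) ℝ) := by
      intro i
      have := congrArg Subtype.val (congrFun hT i)
      exact sub_eq_zero.mp this
    set P : (Fin n → ℝ) → Fin m → ℝ :=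
      fun x i => MvPolynomial.eval x (φ i : MvPolynomial (Fin n) ℝ) with hP
    have hstep : ∀ x, Au.mulVec (P x) = P (As.mulVec x) := by
      intro x
      funext i
      have h1 := congrArg (MvPolynomial.eval x) (hEq i)
      rw [MvPolynomial.aeval_def, MvPolynomial.eval_eval₂] at h1
      have h2 : (MvPolynomial.eval x).comp (algebraMap ℝ (MvPolynomial (Fin n) ℝ))
          = RingHom.id ℝ := by
        ext a; simp
      rw [h2, MvPolynomial.eval₂_id] at h1
      have h3 : (fun s => MvPolynomial.eval x (σp s)) = As.mulVec x := by
        funext s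
        simp [hσp, Matrix.mulVec, dotProduct]
      rw [h3] at h1
      simpa [hP, Matrix.mulVec, dotProduct, map_sum] using h1
    have hiter : ∀ (k : ℕ) (x : Fin n → ℝ),
        P x = ((Au⁻¹) ^ k).mulVec (P ((As ^ k).mulVec x)) := by
      intro k
      induction k with
      | zero => intro x; simp [Matrix.one_mulVec]
      | succ k ih =>
        intro x
        have h2 : P ((As ^ k).mulVec x)
            = (Au⁻¹).mulVec (P (As.mulVec ((As ^ k).mulVec x))) := by
          rw [← hstep, Matrix.mulVec_mulVec, Matrix.nonsing_inv_mul Au hdetAu,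
            Matrix.one_mulVec]
        calc P x = ((Au⁻¹) ^ k).mulVec (P ((As ^ k).mulVec x)) := ih x
          _ = ((Au⁻¹) ^ k).mulVec ((Au⁻¹).mulVec (P (As.mulVec ((As ^ k).mulVec x)))) := by
              rw [h2]
          _ = ((Au⁻¹) ^ (k + 1)).mulVec (P ((As ^ (k + 1)).mulVec x)) := by
              rw [Matrix.mulVec_mulVec, ← pow_succ, Matrix.mulVec_mulVec, ← pow_succ']
    have hPzero : ∀ x i, P x i = 0 := by
      intro x i
      have hy : Filter.Tendsto (fun k : ℕ => (As ^ k).mulVec x) Filter.atTop (nhds 0) := by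
        rw [tendsto_pi_nhds]
        intro l
        have := tendsto_finset_sum (Finset.univ)
          (fun l' (_ : l' ∈ Finset.univ) => ((hAs_ent l l').mul_const (x l')))
        simpa [Matrix.mulVec, dotProduct] using this
      have hy0 : ∀ j, Filter.Tendsto (fun k : ℕ => P ((As ^ k).mulVec x) j)
          Filter.atTop (nhds 0) := by
        intro j
        have hc : Continuous fun y : Fin n → ℝ =>
            MvPolynomial.eval y (φ j : MvPolynomial (Fin n) ℝ) :=
          MvPolynomial.continuous_eval _
        have h0 : MvPolynomial.eval (0 : Fin n → ℝ) (φ j : MvPolynomial (Fin n) ℝ) = 0 := by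
          have hhom : ((φ j : MvPolynomial (Fin n) ℝ)).IsHomogeneous d := (φ j).2
          rw [MvPolynomial.eval_zero]
          apply hhom.coeff_eq_zero
          intro hcon
          simp at hcon
          omega
        have := (hc.tendsto 0).comp hy
        rw [h0] at this
        exact this
      have hfin : Filter.Tendsto
          (fun k : ℕ => (((Au⁻¹) ^ k).mulVec (P ((As ^ k).mulVec x))) i)
          Filter.atTop (nhds 0) := by
        have := tendsto_finset_sum (Finset.univ)
          (fun j (_ : j ∈ Finset.univ) => ((hAu_ent i j).mul (hy0 j)))
        simpa [Matrix.mulVec, dotProduct] using this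
      have hconst : (fun k : ℕ => (((Au⁻¹) ^ k).mulVec (P ((As ^ k).mulVec x))) i)
          = fun _ => P x i := by
        funext k
        exact (congrFun (hiter k x) i).symm
      rw [hconst] at hfin
      exact tendsto_nhds_unique tendsto_const_nhds hfin
    funext i
    apply Subtype.ext
    have hzero : (φ i : MvPolynomial (Fin n) ℝ) = 0 := by
      apply MvPolynomial.funext
      intro x
      simpa using hPzero x i
    simpa using hzero
  have hinj : Function.Injective T := by
    rw [← LinearMap.ker_eq_bot, Submodule.eq_bot_iff]
    intro φ hφ
    exact hker φ (LinearMap.mem_ker.mp hφ)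
  have hsurj : Function.Surjective T := LinearMap.injective_iff_surjective.mp hinj
  obtain ⟨φ, hφ⟩ := hsurj (fun i => ⟨f i, hf i⟩)
  refine ⟨fun i => (φ i : MvPolynomial (Fin n) ℝ), ⟨fun i => (φ i).2, fun i => ?_⟩, ?_⟩
  · have := congrArg Subtype.val (congrFun hφ i)
    simpa [hσp, T] using this
  · rintro ψ ⟨hmem, heq⟩
    have hψ : T (fun i => ⟨ψ i, hmem i⟩) = (fun i => ⟨f i, hf i⟩) := by
      funext i
      apply Subtype.ext
      simpa [hσp, T] using heq i
    have h2 := hinj (hψ.trans hφ.symm)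
    funext i
    exact congrArg Subtype.val (congrFun h2 i)
end

section
/- Let A, B, Q, S, R be real matrices with R invertible, and suppose A' - SR⁻¹B' is invertible. Define the forward Hamiltonian matrix ℍᶠ as the 2n×2n block matrix with blocks ℍᶠ₁₁ = (A - BR⁻¹S') - BR⁻¹B'(A' - SR⁻¹B')⁻¹(Q - SR⁻¹S'), ℍᶠ₁₂ = BR⁻¹B'(A' - SR⁻¹B')⁻¹, ℍᶠ₂₁ = -(A' - SR⁻¹B')⁻¹(Q - SR⁻¹S'), ℍᶠ₂₂ = (A' - SR⁻¹B')⁻¹. Then ℍᶠ satisfies (ℍᶠ)' J ℍᶠ = J, where J = [[0, I],[-I, 0]]; in particular ℍᶠ is invertible. -/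
open Matrix

lemma symp_aux (n : ℕ) (E G W : Matrix (Fin n) (Fin n) ℝ)
    (hG : Gᵀ = G) (hW : Wᵀ = W) (hE : IsUnit E) :
    (Matrix.fromBlocks (Eᵀ - G * E⁻¹ * W) (G * E⁻¹) (-(E⁻¹ * W)) (E⁻¹))ᵀ *
      Matrix.fromBlocks 0 1 (-1) 0 *
      Matrix.fromBlocks (Eᵀ - G * E⁻¹ * W) (G * E⁻¹) (-(E⁻¹ * W)) (E⁻¹) =
    Matrix.fromBlocks 0 1 (-1) 0 := by
  have hdet : IsUnit E.det := (Matrix.isUnit_iff_isUnit_det E).mp hE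
  have h1 : E * E⁻¹ = 1 := Matrix.mul_nonsing_inv E hdet
  have h2 : E⁻¹ * E = 1 := Matrix.nonsing_inv_mul E hdet
  have hEt : Eᵀ * (E⁻¹)ᵀ = 1 := by
    rw [← Matrix.transpose_mul, h2, Matrix.transpose_one]
  have hEt2 : (E⁻¹)ᵀ * Eᵀ = 1 := by
    rw [← Matrix.transpose_mul, h1, Matrix.transpose_one]
  have c1 : ∀ X : Matrix (Fin n) (Fin n) ℝ, E * (E⁻¹ * X) = X := fun X => by
    rw [← Matrix.mul_assoc, h1, Matrix.one_mul]
  have c2 : ∀ X : Matrix (Fin n) (Fin n) ℝ, E⁻¹ * (E * X) = X := fun X => by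
    rw [← Matrix.mul_assoc, h2, Matrix.one_mul]
  have c3 : ∀ X : Matrix (Fin n) (Fin n) ℝ, Eᵀ * ((E⁻¹)ᵀ * X) = X := fun X => by
    rw [← Matrix.mul_assoc, hEt, Matrix.one_mul]
  have c4 : ∀ X : Matrix (Fin n) (Fin n) ℝ, (E⁻¹)ᵀ * (Eᵀ * X) = X := fun X => by
    rw [← Matrix.mul_assoc, hEt2, Matrix.one_mul]
  rw [Matrix.fromBlocks_transpose, Matrix.fromBlocks_multiply, Matrix.fromBlocks_multiply]
  rw [Matrix.fromBlocks_inj]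
  refine ⟨?_, ?_, ?_, ?_⟩ <;>
    simp [Matrix.transpose_sub, Matrix.transpose_mul, Matrix.transpose_neg,
      Matrix.transpose_transpose, hG, hW, Matrix.mul_sub, Matrix.sub_mul,
      Matrix.mul_assoc, h1, h2, hEt, hEt2, c1, c2, c3, c4] <;>
    abel

/-- The forward Hamiltonian matrix `ℍᶠ` is symplectic: `(ℍᶠ)ᵀ J ℍᶠ = J`, and in
particular `ℍᶠ` is invertible. -/
theorem forward_hamiltonian_symplectic
    (n m : ℕ)
    (A Q : Matrix (Fin n) (Fin n) ℝ) (B S : Matrix (Fin n) (Fin m) ℝ)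
    (R : Matrix (Fin m) (Fin m) ℝ)
    (hR : IsUnit R) (hRsym : Rᵀ = R) (hQsym : Qᵀ = Q)
    (hinv : IsUnit (Aᵀ - S * R⁻¹ * Bᵀ))
    (HF : Matrix (Fin n ⊕ Fin n) (Fin n ⊕ Fin n) ℝ)
    (hHF : HF = Matrix.fromBlocks
      ((A - B * R⁻¹ * Sᵀ) - B * R⁻¹ * Bᵀ * (Aᵀ - S * R⁻¹ * Bᵀ)⁻¹ * (Q - S * R⁻¹ * Sᵀ))
      (B * R⁻¹ * Bᵀ * (Aᵀ - S * R⁻¹ * Bᵀ)⁻¹)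
      (-((Aᵀ - S * R⁻¹ * Bᵀ)⁻¹ * (Q - S * R⁻¹ * Sᵀ)))
      ((Aᵀ - S * R⁻¹ * Bᵀ)⁻¹))
    (J : Matrix (Fin n ⊕ Fin n) (Fin n ⊕ Fin n) ℝ)
    (hJ : J = Matrix.fromBlocks 0 1 (-1) 0) :
    HFᵀ * J * HF = J ∧ IsUnit HF := by
  have hRit : (R⁻¹)ᵀ = R⁻¹ := by rw [Matrix.transpose_nonsing_inv, hRsym]
  set E := Aᵀ - S * R⁻¹ * Bᵀ with hE
  set G := B * R⁻¹ * Bᵀ with hGdef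
  set W := Q - S * R⁻¹ * Sᵀ with hWdef
  have hG : Gᵀ = G := by
    simp [hGdef, Matrix.transpose_mul, hRit, Matrix.mul_assoc]
  have hW : Wᵀ = W := by
    simp [hWdef, Matrix.transpose_sub, Matrix.transpose_mul, hRit, hQsym, Matrix.mul_assoc]
  have hAE : A - B * R⁻¹ * Sᵀ = Eᵀ := by
    simp [hE, Matrix.transpose_sub, Matrix.transpose_mul, hRit, Matrix.mul_assoc]
  have hsym : HFᵀ * J * HF = J := by
    rw [hHF, hJ, hAE]
    exact symp_aux n E G W hG hW hinv
  refine ⟨hsym, ?_⟩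
  have hJdet : IsUnit J.det := by
    have hmul : J * (-J) = 1 := by
      rw [hJ, Matrix.mul_neg, Matrix.fromBlocks_multiply]
      norm_num [Matrix.fromBlocks_neg]
    have hdet1 : J.det * (-J).det = 1 := by
      rw [← Matrix.det_mul, hmul, Matrix.det_one]
    exact IsUnit.of_mul_eq_one _ hdet1
  have hd := congrArg Matrix.det hsym
  rw [Matrix.det_mul, Matrix.det_mul, Matrix.det_transpose] at hd
  rw [Matrix.isUnit_iff_isUnit_det]
  have hne : J.det ≠ 0 := hJdet.ne_zero
  have h1 : HF.det * HF.det = 1 := by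
    exact mul_right_cancel₀ hne (by linear_combination hd)
  exact IsUnit.of_mul_eq_one _ h1
end

section
/- Let φ = (φ₁,…,φₙ): U → ℝⁿ be a C¹ map on a star-shaped open neighborhood U of 0 in ℝⁿ with φ(0) = 0, satisfying the symmetry condition ∂φᵢ/∂z_j = ∂φ_j/∂z_i on U for all i, j. Then there exists a C² function ψ: U → ℝ with ψ(0) = 0 and φ = ∇ψ on U. -/
open Set Metric MeasureTheory intervalIntegral Topology Filter

/-- The "dot product" bilinear map on `Fin n → ℝ`, as a continuous linear map. -/
noncomputable def pB (n : ℕ) : (Fin n → ℝ) →L[ℝ] (Fin n → ℝ) →L[ℝ] ℝ :=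
  ∑ i : Fin n, (ContinuousLinearMap.proj i).smulRight (ContinuousLinearMap.proj i)

lemma pB_apply {n : ℕ} (w v : Fin n → ℝ) : pB n w v = ∑ i, w i * v i := by
  simp [pB, ContinuousLinearMap.sum_apply, ContinuousLinearMap.smulRight_apply,
    ContinuousLinearMap.proj_apply, smul_eq_mul]

lemma pB_single {n : ℕ} (w : Fin n → ℝ) (j : Fin n) : pB n w (Pi.single j 1) = w j := by
  classical
  rw [pB_apply]
  simp [Pi.single_apply]

/-- The candidate derivative of `w ↦ ∑ i, φ (t • w) i * w i`. -/
noncomputable def pF' {n : ℕ} (φ : (Fin n → ℝ) → (Fin n → ℝ)) (w : Fin n → ℝ) (t : ℝ) :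
    (Fin n → ℝ) →L[ℝ] ℝ :=
  ∑ i : Fin n, ((φ (t • w) i) • ContinuousLinearMap.proj i
      + (t * w i) • ((ContinuousLinearMap.proj i).comp (fderiv ℝ φ (t • w))))

lemma pF'_apply {n : ℕ} (φ : (Fin n → ℝ) → (Fin n → ℝ)) (w : Fin n → ℝ) (t : ℝ)
    (v : Fin n → ℝ) :
    pF' φ w t v = ∑ i, (φ (t • w) i * v i + t * w i * (fderiv ℝ φ (t • w) v i)) := by
  simp [pF', ContinuousLinearMap.sum_apply, mul_assoc]

/-- Poincaré lemma on a star-shaped domain: a `C¹` vector field with symmetric Jacobian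
on a star-shaped open neighborhood of `0` is the gradient of a `C²` potential. -/
theorem poincare_lemma_star_shaped
    (n : ℕ) (U : Set (Fin n → ℝ)) (hU : IsOpen U) (h0 : (0 : Fin n → ℝ) ∈ U)
    (hstar : StarConvex ℝ (0 : Fin n → ℝ) U)
    (φ : (Fin n → ℝ) → (Fin n → ℝ))
    (hφ : ContDiffOn ℝ 1 φ U) (hφ0 : φ 0 = 0)
    (hsym : ∀ z ∈ U, ∀ i j : Fin n,
      fderiv ℝ φ z (Pi.single j 1) i = fderiv ℝ φ z (Pi.single i 1) j) :
    ∃ ψ : (Fin n → ℝ) → ℝ, ContDiffOn ℝ 2 ψ U ∧ ψ 0 = 0 ∧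
      ∀ z ∈ U, ∀ i : Fin n, fderiv ℝ ψ z (Pi.single i 1) = φ z i := by
  classical
  have hmem : ∀ w ∈ U, ∀ t ∈ Icc (0:ℝ) 1, t • w ∈ U := fun w hw t ht =>
    hstar.smul_mem hw ht.1 ht.2
  have hφdiff : ∀ x ∈ U, HasFDerivAt φ (fderiv ℝ φ x) x := fun x hx =>
    (((hφ.differentiableOn one_ne_zero) x hx).differentiableAt (hU.mem_nhds hx)).hasFDerivAt
  have hfc : ContinuousOn (fderiv ℝ φ) U := hφ.continuousOn_fderiv_of_isOpen hU le_rfl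
  set ψ : (Fin n → ℝ) → ℝ := fun z => ∫ t in (0:ℝ)..1, ∑ i, φ (t • z) i * z i with hψdef
  have key : ∀ z ∈ U, HasFDerivAt ψ (pB n (φ z)) z := by
    intro z hz
    -- a closed-ball neighborhood of z whose segments to 0 stay in U
    have hz1 : ∀ t ∈ Icc (0:ℝ) 1, ∀ᶠ p : (Fin n → ℝ) × ℝ in 𝓝 (z, t), p.2 • p.1 ∈ U := by
      intro t ht
      have hc : ContinuousAt (fun p : (Fin n → ℝ) × ℝ => p.2 • p.1) (z, t) :=
        (continuous_snd.smul continuous_fst).continuousAt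
      exact hc.eventually_mem (hU.mem_nhds (hmem z hz t ht))
    have hev : ∀ᶠ w in 𝓝 z, ∀ t ∈ Icc (0:ℝ) 1, t • w ∈ U :=
      isCompact_Icc.eventually_forall_of_forall_eventually hz1
    obtain ⟨ε, hε, hball⟩ := Metric.eventually_nhds_iff_ball.mp hev
    set r : ℝ := ε / 2 with hrdef
    have hr : 0 < r := by positivity
    have hcb : ∀ w ∈ closedBall z r, ∀ t ∈ Icc (0:ℝ) 1, t • w ∈ U := by
      intro w hw t ht
      exact hball w (lt_of_le_of_lt (mem_closedBall.mp hw) (by simp [hrdef]; linarith)) t ht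
    -- compact set containing all segments
    set K : Set (Fin n → ℝ) := (fun p : ℝ × (Fin n → ℝ) => p.1 • p.2) '' (Icc (0:ℝ) 1 ×ˢ closedBall z r) with hKdef
    have hKc : IsCompact K :=
      (isCompact_Icc.prod (isCompact_closedBall z r)).image (continuous_fst.smul continuous_snd)
    have hKU : K ⊆ U := by
      rintro _ ⟨⟨t, w⟩, ⟨ht, hw⟩, rfl⟩
      exact hcb w hw t ht
    have hKmem : ∀ t ∈ Icc (0:ℝ) 1, ∀ w ∈ closedBall z r, t • w ∈ K := by
      intro t ht w hw
      exact ⟨(t, w), ⟨ht, hw⟩, rfl⟩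
    obtain ⟨C₁, hC₁⟩ := hKc.exists_bound_of_continuousOn (hφ.continuousOn.mono hKU)
    obtain ⟨C₂, hC₂⟩ := hKc.exists_bound_of_continuousOn (hfc.mono hKU)
    set A : ℝ := max C₁ 0 with hAdef
    set B : ℝ := max C₂ 0 with hBdef
    set M : ℝ := n * (A + (‖z‖ + r) * B) with hMdef
    have hM0 : 0 ≤ M := by positivity
    have hIoc : uIoc (0:ℝ) 1 = Ioc 0 1 := uIoc_of_le zero_le_one
    have hIcc : uIcc (0:ℝ) 1 = Icc 0 1 := uIcc_of_le zero_le_one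
    -- continuity of the integrand in t
    have hcont : ∀ w ∈ closedBall z r,
        ContinuousOn (fun t : ℝ => ∑ i, φ (t • w) i * w i) (Icc (0:ℝ) 1) := by
      intro w hw
      have h1 : ContinuousOn (fun t : ℝ => φ (t • w)) (Icc (0:ℝ) 1) :=
        hφ.continuousOn.comp ((continuous_id.smul continuous_const).continuousOn)
          (fun t ht => hcb w hw t ht)
      exact continuousOn_finset_sum _ fun i _ =>
        (((continuous_apply i).comp_continuousOn h1).mul continuousOn_const)
    -- continuity of t ↦ fderiv φ (t • z)
    have hDcont : ContinuousOn (fun t : ℝ => fderiv ℝ φ (t • z)) (Icc (0:ℝ) 1) :=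
      hfc.comp ((continuous_id.smul continuous_const).continuousOn)
        (fun t ht => hcb z (mem_closedBall_self hr.le) t ht)
    have hF'cont : ContinuousOn (fun t : ℝ => pF' φ z t) (Icc (0:ℝ) 1) := by
      have h1 : ContinuousOn (fun t : ℝ => φ (t • z)) (Icc (0:ℝ) 1) :=
        hφ.continuousOn.comp ((continuous_id.smul continuous_const).continuousOn)
          (fun t ht => hcb z (mem_closedBall_self hr.le) t ht)
      refine continuousOn_finset_sum _ fun i _ => ContinuousOn.add ?_ ?_
      · exact ((continuous_apply i).comp_continuousOn h1).smul continuousOn_const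
      · exact ((continuousOn_id.mul continuousOn_const)).smul
          (continuousOn_const.clm_comp hDcont)
    -- pointwise differentiability in w
    have h_diff : ∀ t ∈ uIoc (0:ℝ) 1, ∀ w ∈ ball z r,
        HasFDerivAt (fun w => ∑ i, φ (t • w) i * w i) (pF' φ w t) w := by
      intro t ht w hw
      rw [hIoc] at ht
      have htI : t ∈ Icc (0:ℝ) 1 := ⟨ht.1.le, ht.2⟩
      have hwU : t • w ∈ U := hcb w (ball_subset_closedBall hw) t htI
      have hsm : HasFDerivAt (fun w : Fin n → ℝ => t • w)
          (t • ContinuousLinearMap.id ℝ (Fin n → ℝ)) w :=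
        (t • ContinuousLinearMap.id ℝ (Fin n → ℝ)).hasFDerivAt
      have hφp : HasFDerivAt (fun w : Fin n → ℝ => φ (t • w))
          ((fderiv ℝ φ (t • w)).comp (t • ContinuousLinearMap.id ℝ (Fin n → ℝ))) w :=
        (hφdiff _ hwU).comp w hsm
      refine HasFDerivAt.fun_sum fun i _ => ?_
      have hci := ((ContinuousLinearMap.proj i : (Fin n → ℝ) →L[ℝ] ℝ)).hasFDerivAt.comp w hφp
      have hdi := ((ContinuousLinearMap.proj i : (Fin n → ℝ) →L[ℝ] ℝ)).hasFDerivAt (x := w)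
      have hmul := hci.mul hdi
      refine HasFDerivAt.congr_fderiv hmul ?_
      ext v
      simp only [ContinuousLinearMap.add_apply, ContinuousLinearMap.smul_apply,
        ContinuousLinearMap.coe_comp', Function.comp_apply, ContinuousLinearMap.proj_apply,
        ContinuousLinearMap.coe_smul', Pi.smul_apply, ContinuousLinearMap.coe_id', id_eq,
        (fderiv ℝ φ (t • w)).map_smul, smul_eq_mul]
      ring
    -- bound on the derivative
    have h_bound : ∀ t ∈ uIoc (0:ℝ) 1, ∀ w ∈ ball z r, ‖pF' φ w t‖ ≤ M := by
      intro t ht w hw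
      rw [hIoc] at ht
      have htI : t ∈ Icc (0:ℝ) 1 := ⟨ht.1.le, ht.2⟩
      have hwK : t • w ∈ K := hKmem t htI w (ball_subset_closedBall hw)
      have hwn : ‖w‖ ≤ ‖z‖ + r := by
        calc ‖w‖ = ‖(w - z) + z‖ := by ring_nf
          _ ≤ ‖w - z‖ + ‖z‖ := norm_add_le _ _
          _ ≤ r + ‖z‖ := by
              have := mem_ball_iff_norm.mp hw
              linarith
          _ = ‖z‖ + r := by ring
      refine ContinuousLinearMap.opNorm_le_bound _ hM0 fun v => ?_
      rw [pF'_apply]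
      calc |∑ i, (φ (t • w) i * v i + t * w i * (fderiv ℝ φ (t • w) v i))|
          ≤ ∑ i, |φ (t • w) i * v i + t * w i * (fderiv ℝ φ (t • w) v i)| :=
            Finset.abs_sum_le_sum_abs _ _
        _ ≤ ∑ _i : Fin n, (A + (‖z‖ + r) * B) * ‖v‖ := by
            refine Finset.sum_le_sum fun i _ => ?_
            have e1 : |φ (t • w) i| ≤ A := by
              refine le_trans ?_ (le_max_left C₁ 0)
              exact le_trans (norm_le_pi_norm (φ (t • w)) i) (hC₁ _ hwK)
            have e2 : |v i| ≤ ‖v‖ := norm_le_pi_norm v i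
            have e3 : |(fderiv ℝ φ (t • w) v) i| ≤ B * ‖v‖ := by
              refine le_trans (norm_le_pi_norm (fderiv ℝ φ (t • w) v) i) ?_
              refine le_trans ((fderiv ℝ φ (t • w)).le_opNorm v) ?_
              exact mul_le_mul_of_nonneg_right
                (le_trans (hC₂ _ hwK) (le_max_left C₂ 0)) (norm_nonneg v)
            have e4 : |t| ≤ 1 := by rw [abs_of_nonneg htI.1]; exact htI.2
            have e5 : |w i| ≤ ‖z‖ + r := le_trans (norm_le_pi_norm w i) hwn
            calc |φ (t • w) i * v i + t * w i * (fderiv ℝ φ (t • w) v i)|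
                ≤ |φ (t • w) i * v i| + |t * w i * (fderiv ℝ φ (t • w) v i)| := abs_add_le _ _
              _ = |φ (t • w) i| * |v i| + |t| * |w i| * |(fderiv ℝ φ (t • w) v) i| := by
                  rw [abs_mul, abs_mul, abs_mul]
              _ ≤ A * ‖v‖ + 1 * (‖z‖ + r) * (B * ‖v‖) := by
                  have h0A : (0:ℝ) ≤ A := le_max_right _ _
                  have h0B : (0:ℝ) ≤ B := le_max_right _ _
                  have hb1 : |φ (t • w) i| * |v i| ≤ A * ‖v‖ :=
                    mul_le_mul e1 e2 (abs_nonneg _) h0A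
                  have hb2 : |t| * |w i| * |(fderiv ℝ φ (t • w) v) i| ≤ 1 * (‖z‖ + r) * (B * ‖v‖) :=
                    mul_le_mul (mul_le_mul e4 e5 (abs_nonneg _) zero_le_one) e3 (abs_nonneg _)
                      (by positivity)
                  linarith
              _ = (A + (‖z‖ + r) * B) * ‖v‖ := by ring
        _ = M * ‖v‖ := by
            rw [Finset.sum_const, Finset.card_univ, Fintype.card_fin, nsmul_eq_mul, hMdef]
            ring
    -- measurability
    have hF_meas : ∀ᶠ w in 𝓝 z, AEStronglyMeasurable (fun t : ℝ => ∑ i, φ (t • w) i * w i)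
        ((volume : Measure ℝ).restrict (uIoc (0:ℝ) 1)) := by
      refine Filter.eventually_of_mem (closedBall_mem_nhds z hr) fun w hw => ?_
      exact ((hcont w hw).mono (by rw [hIoc]; exact Ioc_subset_Icc_self)).aestronglyMeasurable
        measurableSet_uIoc
    have hF_int : IntervalIntegrable (fun t : ℝ => ∑ i, φ (t • z) i * z i) volume 0 1 := by
      refine ContinuousOn.intervalIntegrable ?_
      rw [hIcc]; exact hcont z (mem_closedBall_self hr.le)
    have hF'_meas : AEStronglyMeasurable (fun t : ℝ => pF' φ z t)
        ((volume : Measure ℝ).restrict (uIoc (0:ℝ) 1)) :=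
      (hF'cont.mono (by rw [hIoc]; exact Ioc_subset_Icc_self)).aestronglyMeasurable
        measurableSet_uIoc
    have hF'_int : IntervalIntegrable (fun t : ℝ => pF' φ z t) volume 0 1 := by
      refine ContinuousOn.intervalIntegrable ?_
      rw [hIcc]; exact hF'cont
    -- differentiate under the integral sign
    have hKey : HasFDerivAt (fun w => ∫ t in (0:ℝ)..1, ∑ i, φ (t • w) i * w i)
        (∫ t in (0:ℝ)..1, pF' φ z t) z := by
      refine intervalIntegral.hasFDerivAt_integral_of_dominated_of_fderiv_le
        (F' := fun w t => pF' φ w t) (bound := fun _ => M) (ball_mem_nhds z hr) hF_meas hF_int hF'_meas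
        (ae_of_all _ h_bound) intervalIntegrable_const (ae_of_all _ h_diff)
    -- identify the derivative
    have heq : (∫ t in (0:ℝ)..1, pF' φ z t) = pB n (φ z) := by
      apply ContinuousLinearMap.coe_injective
      apply Module.Basis.ext (Pi.basisFun ℝ (Fin n))
      intro j
      rw [Pi.basisFun_apply]
      show (∫ t in (0:ℝ)..1, pF' φ z t) (Pi.single j 1) = pB n (φ z) (Pi.single j 1)
      rw [ContinuousLinearMap.intervalIntegral_apply hF'_int, pB_single]
      have hsum : ∀ t ∈ uIcc (0:ℝ) 1,
          pF' φ z t (Pi.single j 1) = φ (t • z) j + t * (fderiv ℝ φ (t • z) z j) := by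
        intro t ht
        rw [hIcc] at ht
        have htU : t • z ∈ U := hmem z hz t ht
        rw [pF'_apply, Finset.sum_add_distrib]
        congr 1
        · simp [Pi.single_apply]
        · have hz2 : ∑ i, z i • (Pi.single i 1 : Fin n → ℝ) = z := by
            have hs : ∀ i, z i • (Pi.single i 1 : Fin n → ℝ) = Pi.single i (z i) := fun i => by
              rw [← Pi.single_smul, smul_eq_mul, mul_one]
            simp_rw [hs]
            exact Finset.univ_sum_single z
          have hz' : ∑ i, z i * (fderiv ℝ φ (t • z) (Pi.single i 1) j)
              = fderiv ℝ φ (t • z) z j := by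
            have hs : ∀ i, z i * (fderiv ℝ φ (t • z) (Pi.single i 1) j)
                = (fderiv ℝ φ (t • z) (z i • (Pi.single i 1 : Fin n → ℝ))) j := fun i => by
              rw [(fderiv ℝ φ (t • z)).map_smul]; simp [smul_eq_mul]
            simp_rw [hs]
            rw [← Finset.sum_apply, ← _root_.map_sum, hz2]
          rw [← hz', Finset.mul_sum]
          refine Finset.sum_congr rfl fun i _ => ?_
          rw [hsym (t • z) htU i j]
          ring
      rw [intervalIntegral.integral_congr hsum]
      have hderiv : ∀ t ∈ uIcc (0:ℝ) 1,
          HasDerivAt (fun t : ℝ => t * φ (t • z) j) (φ (t • z) j + t * (fderiv ℝ φ (t • z) z j)) t := by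
        intro t ht
        rw [hIcc] at ht
        have htU : t • z ∈ U := hmem z hz t ht
        have h1 : HasDerivAt (fun t : ℝ => t • z) z t := by
          simpa using (hasDerivAt_id t).smul_const z
        have h2 : HasDerivAt (fun t : ℝ => φ (t • z)) (fderiv ℝ φ (t • z) z) t :=
          (hφdiff _ htU).comp_hasDerivAt t h1
        have h3 : HasDerivAt (fun t : ℝ => φ (t • z) j) (fderiv ℝ φ (t • z) z j) t :=
          hasDerivAt_pi.1 h2 j
        exact ((hasDerivAt_id' t).mul h3).congr_deriv (by simp)
      have hint : IntervalIntegrable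
          (fun t : ℝ => φ (t • z) j + t * (fderiv ℝ φ (t • z) z j)) volume 0 1 := by
        refine ContinuousOn.intervalIntegrable ?_
        rw [hIcc]
        have h1 : ContinuousOn (fun t : ℝ => φ (t • z)) (Icc (0:ℝ) 1) :=
          hφ.continuousOn.comp ((continuous_id.smul continuous_const).continuousOn)
            (fun t ht => hmem z hz t ht)
        have hDc : ContinuousOn (fun t : ℝ => fderiv ℝ φ (t • z)) (Icc (0:ℝ) 1) :=
          hfc.comp ((continuous_id.smul continuous_const).continuousOn)
            (fun t ht => hmem z hz t ht)
        refine ContinuousOn.add ((continuous_apply j).comp_continuousOn h1) ?_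
        refine continuousOn_id.mul ?_
        exact (continuous_apply j).comp_continuousOn
          (ContinuousOn.clm_apply hDc continuousOn_const)
      rw [intervalIntegral.integral_eq_sub_of_hasDerivAt hderiv hint]
      simp
    rw [← heq]
    exact hKey
  have fderiv_eq : ∀ z ∈ U, fderiv ℝ ψ z = pB n (φ z) := fun z hz => (key z hz).fderiv
  refine ⟨ψ, ?_, ?_, ?_⟩
  · have h21 : (2 : WithTop ℕ∞) = 1 + 1 := by norm_num
    rw [h21, contDiffOn_succ_iff_fderiv_of_isOpen hU]
    refine ⟨fun z hz => (key z hz).differentiableAt.differentiableWithinAt, ?_, ?_⟩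
    · intro h; exact absurd h (by norm_num)
    · exact (((pB n).contDiff).comp_contDiffOn hφ).congr fderiv_eq
  · simp [hψdef]
  · intro z hz i
    rw [fderiv_eq z hz, pB_single]
end
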